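/- arXiv:1507.04323 — 4 statements merged into one kernel-verified Lean document; each statement's English description precedes it below -/
import Mathlib

section
/- For every integer r ≥ 2 and every nonnegative integer d, f_r(d) ≥ (2r-1)d + 3r) / (r(d² + 5d + 5)), i.e., f_r(d) ≥ ((2r-1)*d + 3r) / (r*(d^2 + 5*d + 5)). -/
noncomputable def f (r : ℕ) : ℕ → ℝ
  | 0 => 1
  | (d+1) => (1 + (((r : ℝ) - 1) * ((d:ℝ)+1)^2 - ((d:ℝ)+1)) * f r d) /
      (1 + ((r : ℝ) - 1) * ((d:ℝ)+1)^2)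

theorem stmt_0 (r : ℕ) (hr : 2 ≤ r) (d : ℕ) :
    f r d ≥ ((2 * (r : ℝ) - 1) * d + 3 * r) / (r * ((d : ℝ)^2 + 5 * d + 5)) := by
  have hr2 : (2:ℝ) ≤ (r:ℝ) := by exact_mod_cast hr
  induction d with
  | zero =>
      simp only [f, Nat.cast_zero]
      rw [ge_iff_le, div_le_one (by nlinarith)]
      nlinarith
  | succ d ih =>
      set x : ℝ := (d:ℝ) with hx
      have hx0 : (0:ℝ) ≤ x := Nat.cast_nonneg d
      have hDd : (0:ℝ) < (r:ℝ) * (x^2 + 5*x + 5) := by nlinarith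
      have hB : (0:ℝ) < 1 + ((r:ℝ) - 1) * (x+1)^2 := by nlinarith
      have hA : (0:ℝ) ≤ ((r:ℝ) - 1) * (x+1)^2 - (x+1) := by nlinarith
      have hDd1 : (0:ℝ) < (r:ℝ) * (((d:ℝ)+1)^2 + 5*((d:ℝ)+1) + 5) := by nlinarith
      have hfd : f r d ≥ ((2 * (r : ℝ) - 1) * x + 3 * r) / ((r:ℝ) * (x^2 + 5*x + 5)) := ih
      show f r (d+1) ≥ _
      have hcast : ((d+1 : ℕ) : ℝ) = x + 1 := by push_cast; ring
      rw [hcast]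
      simp only [f]
      rw [ge_iff_le, div_le_div_iff₀ (by nlinarith) hB]
      have h1 : ((2 * (r : ℝ) - 1) * x + 3 * r) ≤ f r d * ((r:ℝ) * (x^2 + 5*x + 5)) := by
        rw [ge_iff_le, div_le_iff₀ hDd] at hfd
        linarith
      have key : ((2 * (r:ℝ) - 1) * (x+1) + 3 * r) * (1 + ((r:ℝ) - 1) * (x+1)^2)
          * ((r:ℝ) * (x^2 + 5*x + 5))
          ≤ ((r:ℝ) * (x^2 + 5*x + 5) + (((r:ℝ) - 1) * (x+1)^2 - (x+1))
              * ((2 * (r:ℝ) - 1) * x + 3 * r))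
            * ((r:ℝ) * ((x+1)^2 + 5*(x+1) + 5)) := by
        nlinarith [mul_nonneg (sub_nonneg.2 hr2) hx0, sq_nonneg ((r:ℝ)-2), sq_nonneg x,
          mul_nonneg (mul_nonneg (sub_nonneg.2 hr2) hx0) hx0,
          mul_nonneg (mul_nonneg (mul_nonneg (sub_nonneg.2 hr2) hx0) hx0) hx0,
          mul_nonneg (mul_nonneg (mul_nonneg (mul_nonneg (sub_nonneg.2 hr2) hx0) hx0) hx0) hx0,
          mul_nonneg (mul_nonneg (sub_nonneg.2 hr2) (sub_nonneg.2 hr2)) hx0,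
          mul_nonneg (mul_nonneg (mul_nonneg (sub_nonneg.2 hr2) (sub_nonneg.2 hr2)) hx0) hx0,
          mul_nonneg (mul_nonneg (mul_nonneg (mul_nonneg (sub_nonneg.2 hr2) (sub_nonneg.2 hr2)) hx0) hx0) hx0,
          mul_nonneg (mul_nonneg (mul_nonneg (mul_nonneg (mul_nonneg (sub_nonneg.2 hr2) (sub_nonneg.2 hr2)) hx0) hx0) hx0) hx0]
      have h2 : ((r:ℝ) * (x^2 + 5*x + 5) + (((r:ℝ) - 1) * (x+1)^2 - (x+1))
              * ((2 * (r:ℝ) - 1) * x + 3 * r))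
          ≤ (1 + (((r:ℝ) - 1) * (x+1)^2 - (x+1)) * f r d) * ((r:ℝ) * (x^2 + 5*x + 5)) := by
        have := mul_le_mul_of_nonneg_left h1 hA
        nlinarith
      have final : ((2 * (r:ℝ) - 1) * (x+1) + 3 * r) * (1 + ((r:ℝ) - 1) * (x+1)^2)
          * ((r:ℝ) * (x^2 + 5*x + 5))
          ≤ (1 + (((r:ℝ) - 1) * (x+1)^2 - (x+1)) * f r d)
            * ((r:ℝ) * ((x+1)^2 + 5*(x+1) + 5)) * ((r:ℝ) * (x^2 + 5*x + 5)) := by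
        calc _ ≤ ((r:ℝ) * (x^2 + 5*x + 5) + (((r:ℝ) - 1) * (x+1)^2 - (x+1))
                * ((2 * (r:ℝ) - 1) * x + 3 * r)) * ((r:ℝ) * ((x+1)^2 + 5*(x+1) + 5)) := key
          _ ≤ (1 + (((r:ℝ) - 1) * (x+1)^2 - (x+1)) * f r d) * ((r:ℝ) * (x^2 + 5*x + 5))
                * ((r:ℝ) * ((x+1)^2 + 5*(x+1) + 5)) :=
              mul_le_mul_of_nonneg_right h2 (le_of_lt hDd1)
          _ = _ := by ring
      exact le_of_mul_le_mul_right final hDd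
end

section
/- For every integer r ≥ 2 and every nonnegative integer d, f_r(d) - f_r(d+1) ≥ f_r(d+1) - f_r(d+2); that is, the sequence f_r is convex. -/
lemma f_succ (r d : ℕ) : f r (d+1) =
    (1 + (((r : ℝ) - 1) * ((d:ℝ)+1)^2 - ((d:ℝ)+1)) * f r d) /
      (1 + ((r : ℝ) - 1) * ((d:ℝ)+1)^2) := rfl

lemma step_real (a n x : ℝ) (ha : 1 ≤ a) (hn : 0 ≤ n)
    (hx : (a+1) * ((n+2)*x - 1) ≥ a) :
    (a+1) * ((n+3) * ((1 + (a*(n+1)^2 - (n+1))*x) / (1 + a*(n+1)^2)) - 1) ≥ a := by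
  have hD1 : (0:ℝ) < 1 + a * (n+1)^2 := by nlinarith
  rw [ge_iff_le, ← sub_nonneg]
  have e : (a+1) * ((n+3) * ((1 + (a*(n+1)^2 - (n+1))*x) / (1 + a*(n+1)^2)) - 1) - a
      = ((a+1) * ((n+3) * (1 + (a*(n+1)^2 - (n+1))*x)) - (a+1) * (1 + a*(n+1)^2)
          - a * (1 + a*(n+1)^2)) / (1 + a*(n+1)^2) := by
    field_simp
  rw [e]
  apply div_nonneg _ (le_of_lt hD1)
  have hq : (0:ℝ) ≤ a*(n+1)-1 := by nlinarith
  have h1 : (0:ℝ) ≤ ((a+1) * ((n+2)*x - 1) - a) * ((n+1)*(n+3)*(a*(n+1)-1)) := by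
    apply mul_nonneg (by linarith)
    apply mul_nonneg (by nlinarith) hq
  have h2 : (0:ℝ) ≤ (2*a*(n+1)-1) * (a*(n+1)-1) := by
    apply mul_nonneg (by nlinarith) hq
  nlinarith [h1, h2, show (0:ℝ) < n+2 by linarith]

lemma key (r : ℕ) (hr : 2 ≤ r) : ∀ d : ℕ,
    ((r:ℝ) - 1 + 1) * (((d:ℝ) + 2) * f r d - 1) ≥ (r : ℝ) - 1 := by
  have hr2 : (2:ℝ) ≤ (r:ℝ) := by exact_mod_cast hr
  intro d
  induction d with
  | zero => simp [f]; linarith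
  | succ d ih =>
    have hn : (0:ℝ) ≤ (d:ℝ) := Nat.cast_nonneg d
    have ha1 : (1:ℝ) ≤ (r:ℝ) - 1 := by linarith
    have h := step_real ((r:ℝ)-1) (d:ℝ) (f r d) ha1 hn ih
    have e : ((r:ℝ) - 1 + 1) * ((((d+1:ℕ):ℝ) + 2) * f r (d+1) - 1)
        = ((r:ℝ)-1+1) * (((d:ℝ)+3) * ((1 + (((r:ℝ)-1)*((d:ℝ)+1)^2 - ((d:ℝ)+1)) * f r d) / (1 + ((r:ℝ)-1)*((d:ℝ)+1)^2)) - 1) := by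
      rw [f_succ]; push_cast; ring
    rw [e]; exact h

lemma main_real (a n x : ℝ) (ha : 1 ≤ a) (hn : 0 ≤ n)
    (hx : (a+1) * ((n+2)*x - 1) ≥ a) :
    x - (1 + (a*(n+1)^2 - (n+1))*x) / (1 + a*(n+1)^2) ≥
    (1 + (a*(n+1)^2 - (n+1))*x) / (1 + a*(n+1)^2) -
      (1 + (a*(n+2)^2 - (n+2)) * ((1 + (a*(n+1)^2 - (n+1))*x) / (1 + a*(n+1)^2))) / (1 + a*(n+2)^2) := by
  have hD1 : (0:ℝ) < 1 + a * (n+1)^2 := by nlinarith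
  have hD2 : (0:ℝ) < 1 + a * (n+2)^2 := by nlinarith
  rw [ge_iff_le, ← sub_nonneg]
  have hnum : (0:ℝ) ≤ (a+1) * (n^2+5*n+5) * ((n+2)*x - 1) - (1 + a*(n+1)^2) := by
    nlinarith [mul_le_mul_of_nonneg_left hx (by nlinarith : (0:ℝ) ≤ n^2+5*n+5)]
  have e3 : x - (1 + (a*(n+1)^2 - (n+1))*x) / (1 + a*(n+1)^2) -
      ((1 + (a*(n+1)^2 - (n+1))*x) / (1 + a*(n+1)^2) -
        (1 + (a*(n+2)^2 - (n+2)) * ((1 + (a*(n+1)^2 - (n+1))*x) / (1 + a*(n+1)^2))) / (1 + a*(n+2)^2))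
      = ((a+1) * (n^2+5*n+5) * ((n+2)*x - 1) - (1 + a*(n+1)^2)) /
          ((n+2) * (1 + a*(n+1)^2) * (1 + a*(n+2)^2)) := by
    field_simp
    ring
  rw [e3]
  positivity

theorem stmt_1 (r : ℕ) (hr : 2 ≤ r) (d : ℕ) :
    f r d - f r (d + 1) ≥ f r (d + 1) - f r (d + 2) := by
  have hr2 : (2:ℝ) ≤ (r:ℝ) := by exact_mod_cast hr
  have hn : (0:ℝ) ≤ (d:ℝ) := Nat.cast_nonneg d
  have ha1 : (1:ℝ) ≤ (r:ℝ) - 1 := by linarith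
  have hu := key r hr d
  have h := main_real ((r:ℝ)-1) (d:ℝ) (f r d) ha1 hn hu
  have e1 : f r (d+1) = (1 + (((r:ℝ)-1)*((d:ℝ)+1)^2 - ((d:ℝ)+1)) * f r d) /
      (1 + ((r:ℝ)-1)*((d:ℝ)+1)^2) := f_succ r d
  have e2 : f r (d+2) = (1 + (((r:ℝ)-1)*((d:ℝ)+2)^2 - ((d:ℝ)+2)) * f r (d+1)) /
      (1 + ((r:ℝ)-1)*((d:ℝ)+2)^2) := by
    have h2 := f_succ r (d+1)
    push_cast at h2
    rw [show d+2 = d+1+1 from rfl, h2]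
    ring_nf
  rw [e1, e2, e1]
  exact h
end

section
/- For all integers r ≥ 3 and d ≥ 2, f_r(d) > f_CT(r)(d); that is, the function f_r from the recursion strictly dominates the Caro–Tuza function at every degree d ≥ 2. -/
noncomputable def fCT (r d : ℕ) : ℝ :=
  ∏ i ∈ Finset.Icc 1 d, ((i : ℝ) / ((i : ℝ) + 1 / ((r : ℝ) - 1)))

lemma fCT_succ (r n : ℕ) :
    fCT r (n+1) = fCT r n * (((n:ℝ)+1) / (((n:ℝ)+1) + 1 / ((r : ℝ) - 1))) := by
  unfold fCT
  rw [Finset.prod_Icc_succ_top (Nat.le_add_left 1 n)]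
  push_cast
  ring

lemma fCT_pos (r d : ℕ) (hr : 3 ≤ r) : 0 < fCT r d := by
  have hs : (2:ℝ) ≤ (r:ℝ) - 1 := by
    have : (3:ℝ) ≤ (r:ℝ) := by exact_mod_cast hr
    linarith
  apply Finset.prod_pos
  intro i hi
  simp only [Finset.mem_Icc] at hi
  have : (1:ℝ) ≤ (i:ℝ) := by exact_mod_cast hi.1
  have h1 : 0 < 1 / ((r:ℝ) - 1) := by positivity
  positivity

lemma fCT_le (r d : ℕ) (hr : 3 ≤ r) (hd : 1 ≤ d) :
    fCT r d ≤ ((r:ℝ) - 1) / ((r:ℝ) - 1 + 1) := by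
  have hs : (2:ℝ) ≤ (r:ℝ) - 1 := by
    have : (3:ℝ) ≤ (r:ℝ) := by exact_mod_cast hr
    linarith
  induction d with
  | zero => omega
  | succ n ih =>
    rcases Nat.eq_or_lt_of_le hd with h | h
    · -- n+1 = 1, so n = 0
      have hn : n = 0 := by omega
      subst hn
      rw [fCT_succ]
      have h0 : fCT r 0 = 1 := by unfold fCT; simp
      rw [h0, one_mul]
      rw [div_le_div_iff₀ (by positivity) (by positivity)]
      push_cast
      have hs0 : (0:ℝ) < (r:ℝ) - 1 := by linarith
      field_simp
      linarith
    · have hn : 1 ≤ n := by omega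
      have ihn := ih hn
      rw [fCT_succ]
      have hpos := fCT_pos r n hr
      have hterm : ((n:ℝ)+1) / (((n:ℝ)+1) + 1 / ((r : ℝ) - 1)) ≤ 1 := by
        rw [div_le_one (by positivity)]
        have : (0:ℝ) < 1 / ((r:ℝ) - 1) := by positivity
        linarith
      calc fCT r n * (((n:ℝ)+1) / (((n:ℝ)+1) + 1 / ((r : ℝ) - 1)))
          ≤ fCT r n * 1 := by
            apply mul_le_mul_of_nonneg_left hterm (le_of_lt hpos)
        _ = fCT r n := by ring
        _ ≤ _ := ihn

lemma f_step (r n : ℕ) (hr : 3 ≤ r) (hn : 1 ≤ n) (h : fCT r n ≤ f r n) :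
    fCT r (n+1) < f r (n+1) := by
  have hs : (2:ℝ) ≤ (r:ℝ) - 1 := by
    have : (3:ℝ) ≤ (r:ℝ) := by exact_mod_cast hr
    linarith
  set s : ℝ := (r:ℝ) - 1 with hsdef
  set D : ℝ := (n:ℝ) + 1 with hDdef
  have hD : (2:ℝ) ≤ D := by
    have : (1:ℝ) ≤ (n:ℝ) := by exact_mod_cast hn
    simp [hDdef]; linarith
  have hx : 0 < fCT r n := fCT_pos r n hr
  have hxle : fCT r n ≤ s / (s + 1) := fCT_le r n hr hn
  have hden : (0:ℝ) < 1 + s * D^2 := by nlinarith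
  have hcoef : (0:ℝ) ≤ s * D^2 - D := by nlinarith
  have hf : f r (n+1) = (1 + (s * D^2 - D) * f r n) / (1 + s * D^2) := rfl
  rw [hf, fCT_succ]
  set x : ℝ := fCT r n
  have hs0 : (0:ℝ) < s := by linarith
  have h1 : x * (s + 1) ≤ s := by
    rw [le_div_iff₀ (by linarith : (0:ℝ) < s + 1)] at hxle
    exact hxle
  have h2 : x * D * (s + 1) ≤ s * D := by nlinarith
  have hterm : D / (D + 1/s) = s * D / (s * D + 1) := by
    rw [div_eq_div_iff (by positivity) (by positivity)]
    field_simp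
  have key : x * (D / (D + 1/s)) < (1 + (s * D^2 - D) * x) / (1 + s * D^2) := by
    rw [hterm, show x * (s * D / (s * D + 1)) = (x * s * D) / (s * D + 1) from by ring,
      div_lt_div_iff₀ (by positivity) hden]
    nlinarith
  calc x * (D / (D + 1/s)) < (1 + (s * D^2 - D) * x) / (1 + s * D^2) := key
    _ ≤ (1 + (s * D^2 - D) * f r n) / (1 + s * D^2) := by
        gcongr
  
lemma f_one (r : ℕ) (hr : 3 ≤ r) : f r 1 = fCT r 1 := by
  have hs : (2:ℝ) ≤ (r:ℝ) - 1 := by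
    have : (3:ℝ) ≤ (r:ℝ) := by exact_mod_cast hr
    linarith
  have h0 : fCT r 1 = 1 / (1 + 1 / ((r:ℝ) - 1)) := by
    unfold fCT; simp
  have h1 : f r 1 = (1 + (((r:ℝ) - 1) * 1^2 - 1) * 1) / (1 + ((r:ℝ) - 1) * 1^2) := by
    show ((1 + (((r : ℝ) - 1) * ((0:ℕ)+1:ℝ)^2 - ((0:ℕ)+1:ℝ)) * f r 0) /
      (1 + ((r : ℝ) - 1) * ((0:ℕ)+1:ℝ)^2)) = _
    norm_num [f]
  rw [h0, h1]
  have hs0 : (0:ℝ) < (r:ℝ) - 1 := by linarith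
  field_simp
  ring

theorem stmt_7 (r d : ℕ) (hr : 3 ≤ r) (hd : 2 ≤ d) :
    f r d > fCT r d := by
  obtain ⟨m, rfl⟩ : ∃ m, d = m + 2 := ⟨d - 2, by omega⟩
  clear hd
  induction m with
  | zero =>
    exact f_step r 1 hr le_rfl (le_of_eq (f_one r hr).symm)
  | succ k ih =>
    exact f_step r (k + 2) hr (by omega) (le_of_lt ih)
end

section
/- Let H be an r-uniform linear triangle-free hypergraph with r ≥ 2, let x be a vertex, and let R be a set of neighbors of x such that every edge containing x meets R in exactly one vertex. Then for every vertex z ∈ V(H) \ ({x} ∪ R), the degree of z in H - ({x} ∪ R) equals d_H(z) - |N_H(z) ∩ R|. -/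
open scoped Classical

/-- The degree of a vertex `u`: the number of edges containing `u`. -/
noncomputable def hdeg {α : Type*} (E : Finset (Finset α)) (u : α) : ℕ :=
  (E.filter (fun e => u ∈ e)).card

/-- The (weak) independence number: the maximum cardinality of a subset of the
vertex set `V` containing no edge of `E`. -/
noncomputable def indepNum {α : Type*} (V : Finset α) (E : Finset (Finset α)) : ℕ :=
  ((V.powerset.filter (fun I => ∀ e ∈ E, ¬ e ⊆ I)).sup Finset.card)

/-- The neighborhood of `u` within the vertex set `V`. -/
noncomputable def nbhd {α : Type*} [DecidableEq α] (V : Finset α) (E : Finset (Finset α))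
    (u : α) : Finset α :=
  V.filter (fun v => v ≠ u ∧ ∃ e ∈ E, u ∈ e ∧ v ∈ e)

/-- `H` is linear: two distinct edges share at most one vertex. -/
def Linear {α : Type*} [DecidableEq α] (E : Finset (Finset α)) : Prop :=
  ∀ e₁ ∈ E, ∀ e₂ ∈ E, e₁ ≠ e₂ → (e₁ ∩ e₂).card ≤ 1

/-- `H` is `r`-uniform: every edge has cardinality `r`. -/
def Uniform {α : Type*} (E : Finset (Finset α)) (r : ℕ) : Prop :=
  ∀ e ∈ E, e.card = r

/-- `H` is triangle-free. -/
def TriangleFree {α : Type*} [DecidableEq α] (E : Finset (Finset α)) : Prop :=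
  ¬ ∃ u₁ u₂ u₃ : α, ∃ e₁ ∈ E, ∃ e₂ ∈ E, ∃ e₃ ∈ E,
      u₁ ≠ u₂ ∧ u₁ ≠ u₃ ∧ u₂ ≠ u₃ ∧ e₁ ≠ e₂ ∧ e₁ ≠ e₃ ∧ e₂ ≠ e₃ ∧
      ({u₁, u₂, u₃} : Finset α) \ {u₁} ⊆ e₁ ∧
      ({u₁, u₂, u₃} : Finset α) \ {u₂} ⊆ e₂ ∧
      ({u₁, u₂, u₃} : Finset α) \ {u₃} ⊆ e₃

theorem stmt_15 {α : Type*} [DecidableEq α] (V : Finset α) (E : Finset (Finset α))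
    (hVE : ∀ e ∈ E, e ⊆ V) (r : ℕ) (hr : 2 ≤ r)
    (hunif : Uniform E r) (hlin : Linear E) (htf : TriangleFree E)
    (x : α) (hx : x ∈ V) (R : Finset α) (hR : R ⊆ nbhd V E x)
    (hmeet : ∀ e ∈ E, x ∈ e → (e ∩ R).card = 1)
    (z : α) (hz : z ∈ V \ insert x R) :
    hdeg (E.filter (fun e => Disjoint e (insert x R))) z
      = hdeg E z - (nbhd V E z ∩ R).card := by

  classical
  simp only [Finset.mem_sdiff, Finset.mem_insert, not_or] at hz
  obtain ⟨hzV, hzx, hzR⟩ := hz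
  -- uniqueness of the element of e ∩ R for an edge containing z
  have huniq : ∀ e ∈ E, z ∈ e → ∀ w₁ ∈ e ∩ R, ∀ w₂ ∈ e ∩ R, w₁ = w₂ := by
    intro e he hze w₁ h₁ w₂ h₂
    by_contra hne
    rw [Finset.mem_inter] at h₁ h₂
    obtain ⟨h₁e, h₁R⟩ := h₁
    obtain ⟨h₂e, h₂R⟩ := h₂
    have hx1 := hR h₁R
    have hx2 := hR h₂R
    simp only [nbhd, Finset.mem_filter] at hx1 hx2
    obtain ⟨hV1, hne1, f₁, hf₁E, hxf₁, hwf₁⟩ := hx1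
    obtain ⟨hV2, hne2, f₂, hf₂E, hxf₂, hwf₂⟩ := hx2
    have hxe : x ∉ e := by
      intro hxe
      have hm := hmeet e he hxe
      have h2 : ({w₁, w₂} : Finset α) ⊆ e ∩ R := by
        intro a ha
        simp only [Finset.mem_insert, Finset.mem_singleton] at ha
        rcases ha with rfl | rfl <;> simp [Finset.mem_inter, h₁e, h₁R, h₂e, h₂R]
      have hle := Finset.card_le_card h2
      rw [Finset.card_pair hne] at hle
      omega
    have hef1 : e ≠ f₁ := fun h => hxe (h ▸ hxf₁)
    have hef2 : e ≠ f₂ := fun h => hxe (h ▸ hxf₂)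
    have hf12 : f₁ ≠ f₂ := by
      intro h
      subst h
      have hsub : ({w₁, w₂} : Finset α) ⊆ e ∩ f₁ := by
        intro a ha
        simp only [Finset.mem_insert, Finset.mem_singleton] at ha
        rcases ha with rfl | rfl <;> simp [Finset.mem_inter, h₁e, h₂e, hwf₁, hwf₂]
      have hle := Finset.card_le_card hsub
      rw [Finset.card_pair hne] at hle
      have := hlin e he f₁ hf₁E hef1
      omega
    refine htf ⟨x, w₁, w₂, e, he, f₂, hf₂E, f₁, hf₁E, Ne.symm hne1, Ne.symm hne2, hne,
      hef2, hef1, Ne.symm hf12, ?_, ?_, ?_⟩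
    · intro a ha
      simp only [Finset.mem_sdiff, Finset.mem_insert, Finset.mem_singleton] at ha
      obtain ⟨h, hax⟩ := ha
      rcases h with rfl | rfl | rfl
      · exact absurd rfl hax
      · exact h₁e
      · exact h₂e
    · intro a ha
      simp only [Finset.mem_sdiff, Finset.mem_insert, Finset.mem_singleton] at ha
      obtain ⟨h, haw⟩ := ha
      rcases h with rfl | rfl | rfl
      · exact hxf₂
      · exact absurd rfl haw
      · exact hwf₂
    · intro a ha
      simp only [Finset.mem_sdiff, Finset.mem_insert, Finset.mem_singleton] at ha
      obtain ⟨h, haw⟩ := ha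
      rcases h with rfl | rfl | rfl
      · exact hxf₁
      · exact hwf₁
      · exact absurd rfl haw
  have hS : ∀ e ∈ E.filter (fun e => z ∈ e ∧ ¬ Disjoint e (insert x R)),
      (e ∩ R).Nonempty := by
    intro e he
    rw [Finset.mem_filter] at he
    obtain ⟨heE, hze, hnd⟩ := he
    rw [Finset.not_disjoint_iff] at hnd
    obtain ⟨v, hve, hvA⟩ := hnd
    rw [Finset.mem_insert] at hvA
    rcases hvA with rfl | hvR
    · have := hmeet e heE hve
      exact Finset.card_pos.mp (by omega)
    · exact ⟨v, Finset.mem_inter.mpr ⟨hve, hvR⟩⟩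
  have key : (E.filter (fun e => z ∈ e ∧ ¬ Disjoint e (insert x R))).card
      = (nbhd V E z ∩ R).card := by
    apply Finset.card_bij (fun e he => (hS e he).choose)
    · intro e he
      have hc := (hS e he).choose_spec
      rw [Finset.mem_inter] at hc
      obtain ⟨hwe, hwR⟩ := hc
      obtain ⟨heE, hze, -⟩ := Finset.mem_filter.mp he
      have hmem := hR hwR
      simp only [nbhd, Finset.mem_filter] at hmem
      rw [Finset.mem_inter]
      simp only [nbhd, Finset.mem_filter]
      exact ⟨⟨hmem.1, fun h => hzR (h ▸ hwR), e, heE, hze, hwe⟩, hwR⟩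
    · intro e₁ he₁ e₂ he₂ heq
      by_contra hne
      have hc₁ := (hS e₁ he₁).choose_spec
      have hc₂ := (hS e₂ he₂).choose_spec
      rw [Finset.mem_inter] at hc₁ hc₂
      obtain ⟨he₁E, hze₁, -⟩ := Finset.mem_filter.mp he₁
      obtain ⟨he₂E, hze₂, -⟩ := Finset.mem_filter.mp he₂
      have hwz : (hS e₁ he₁).choose ≠ z := fun h => hzR (h ▸ hc₁.2)
      have hsub : ({z, (hS e₁ he₁).choose} : Finset α) ⊆ e₁ ∩ e₂ := by
        intro a ha
        simp only [Finset.mem_insert, Finset.mem_singleton] at ha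
        rcases ha with rfl | rfl
        · exact Finset.mem_inter.mpr ⟨hze₁, hze₂⟩
        · exact Finset.mem_inter.mpr ⟨hc₁.1, heq ▸ hc₂.1⟩
      have hle := Finset.card_le_card hsub
      rw [Finset.card_pair (Ne.symm hwz)] at hle
      have := hlin e₁ he₁E e₂ he₂E hne
      omega
    · intro w hw
      rw [Finset.mem_inter] at hw
      obtain ⟨hwN, hwR⟩ := hw
      simp only [nbhd, Finset.mem_filter] at hwN
      obtain ⟨hwV, hwz, f, hfE, hzf, hwf⟩ := hwN
      have hfS : f ∈ E.filter (fun e => z ∈ e ∧ ¬ Disjoint e (insert x R)) := by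
        rw [Finset.mem_filter]
        refine ⟨hfE, hzf, ?_⟩
        rw [Finset.not_disjoint_iff]
        exact ⟨w, hwf, Finset.mem_insert.mpr (Or.inr hwR)⟩
      refine ⟨f, hfS, ?_⟩
      have hc := (hS f hfS).choose_spec
      exact huniq f hfE hzf _ hc _ (Finset.mem_inter.mpr ⟨hwf, hwR⟩)
  have hsplit := Finset.card_filter_add_card_filter_not
    (s := E.filter (fun e => z ∈ e)) (p := fun e => Disjoint e (insert x R))
  rw [Finset.filter_filter, Finset.filter_filter] at hsplit
  unfold hdeg
  rw [Finset.filter_comm, Finset.filter_filter]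
  rw [← key]
  refine Nat.eq_sub_of_add_eq ?_
  convert hsplit using 3
  simp
end
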